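/- If c and d are involutions in a free product G₁ * G₂, then the product cd either has finite order or is conjugate to an element of the form c₁ z c₂ z⁻¹ where c₁ and c₂ are involutions lying in G₁ or G₂ and z ∈ G₁ * G₂. -/

import Mathlib

open Monoid Monoid.CoprodI

namespace InvolAux

variable {ι : Type*} {G : ι → Type*} [∀ i, Group (G i)]

def P (l : List (Σ i, G i)) : CoprodI G := (l.map fun p => of p.2).prod

theorem P_append (a b : List (Σ i, G i)) : P (a ++ b) = P a * P b := by simp [P]

theorem P_cons (p : Σ i, G i) (l : List (Σ i, G i)) : P (p :: l) = of p.2 * P l := by simp [P]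

theorem P_singleton (p : Σ i, G i) : P [p] = of p.2 := by simp [P]

theorem word_prod_eq (w : Word G) : Word.prod w = P w.toList := rfl

section
variable [DecidableEq ι] [∀ i, DecidableEq (G i)]

theorem prod_equiv (x : CoprodI G) : Word.prod (Word.equiv x) = x :=
  (Word.equiv (M := G)).symm_apply_apply x

theorem equiv_prod (w : Word G) : Word.equiv (Word.prod w) = w :=
  (Word.equiv (M := G)).apply_symm_apply w

theorem prod_injective : Function.Injective (Word.prod : Word G → CoprodI G) := by
  intro a b h
  rw [← equiv_prod a, h, equiv_prod]

/-- Claim A: a nonempty reduced word with distinct end indices has nontrivial square. -/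
theorem sq_ne_one (l : List (Σ i, G i)) (hne : l ≠ [])
    (h1 : ∀ p ∈ l, p.2 ≠ 1) (h2 : l.Chain' fun p q => p.1 ≠ q.1)
    (hends : (l.getLast hne).1 ≠ (l.head hne).1) :
    P l * P l ≠ 1 := by
  intro hsq
  have hch : (l ++ l).Chain' fun p q : (Σ i, G i) => p.1 ≠ q.1 := by
    rw [List.Chain', List.isChain_append]
    refine ⟨h2, h2, ?_⟩
    intro x hx y hy
    rw [List.getLast?_eq_getLast hne] at hx
    rw [List.head?_eq_head hne] at hy
    cases hx; cases hy; exact hends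
  have h1' : ∀ p ∈ l ++ l, Sigma.snd p ≠ 1 := by
    intro p hp
    rcases List.mem_append.1 hp with h | h <;> exact h1 p h
  set w : Word G := ⟨l ++ l, h1', hch⟩ with hw
  have : Word.prod w = Word.prod Word.empty := by
    rw [word_prod_eq, Word.prod_empty]
    show P (l ++ l) = 1
    rw [P_append]; exact hsq
  have := congrArg Word.toList (prod_injective this)
  simp [hw] at this
  exact hne this

/-- Main torsion lemma: an involution in a free product is conjugate into a factor. -/
theorem conj_lemma : ∀ (n : ℕ) (x : CoprodI G), (Word.equiv x).toList.length ≤ n →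
    x ≠ 1 → x * x = 1 →
    ∃ (h : CoprodI G) (i : ι) (g : G i), g * g = 1 ∧ g ≠ 1 ∧ x = h * of g * h⁻¹ := by
  intro n
  induction n with
  | zero =>
    intro x hlen hx1 _
    exfalso
    apply hx1
    have h0 : (Word.equiv x).toList = [] := List.length_eq_zero_iff.mp (Nat.le_zero.mp hlen)
    have : Word.equiv x = Word.empty := Word.ext h0
    rw [← prod_equiv x, this, Word.prod_empty]
  | succ n ih =>
    intro x hlen hx1 hx2
    have hxw : x = P (Word.equiv x).toList := by rw [← word_prod_eq, prod_equiv]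
    rcases hl : (Word.equiv x).toList with _ | ⟨⟨i, g⟩, l'⟩
    · exfalso; apply hx1
      have : Word.equiv x = Word.empty := Word.ext hl
      rw [← prod_equiv x, this, Word.prod_empty]
    · have h1 : ∀ p ∈ (⟨i, g⟩ : Σ i, G i) :: l', p.2 ≠ 1 := hl ▸ (Word.equiv x).ne_one
      have h2 : ((⟨i, g⟩ : Σ i, G i) :: l').Chain' fun p q => p.1 ≠ q.1 :=
        hl ▸ (Word.equiv x).chain_ne
      rw [hl] at hxw
      rw [hl] at hlen
      simp only [List.length_cons, Nat.add_le_add_iff_right] at hlen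
      rcases eq_or_ne l' [] with rfl | hl'ne
      · -- single letter
        rw [P_singleton] at hxw
        refine ⟨1, i, g, ?_, h1 ⟨i, g⟩ (by simp), by simp [hxw]⟩
        have : of (g * g) = of (1 : G i) := by
          rw [map_mul, map_one, ← hxw]; exact hx2
        exact of_injective i this
      · -- length ≥ 2
        have hlne : (⟨i, g⟩ : Σ i, G i) :: l' ≠ [] := by simp
        by_cases hij : ((((⟨i, g⟩ : Σ i, G i) :: l').getLast hlne)).1 = i
        · -- head index = last index: conjugate to shorter word and recurse
          rcases hqe : l'.getLast hl'ne with ⟨j, g'⟩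
          have hji : j = i := by
            have := List.getLast_cons (a := (⟨i, g⟩ : Σ i, G i)) hl'ne
            rw [this, hqe] at hij
            exact hij
          subst hji
          set l'' := l'.dropLast with hl''
          have hsplit : l'' ++ [⟨j, g'⟩] = l' := by
            rw [hl'', ← hqe]; exact List.dropLast_concat_getLast hl'ne
          -- facts about l''
          have hsub : ∀ p ∈ l'', p ∈ (⟨j, g⟩ : Σ i, G i) :: l' := by
            intro p hp
            exact List.mem_cons_of_mem _ (hsplit ▸ List.mem_append_left _ hp)
          have hch' : l'.Chain' fun p q => p.1 ≠ q.1 := h2.tail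
          rw [← hsplit] at hch'
          rw [List.Chain', List.isChain_append] at hch'
          obtain ⟨hch'', -, hbound⟩ := hch'
          -- x in terms of l''
          have hx_eq : x = of g * P l'' * of g' := by
            rw [hxw, P_cons, ← hsplit, P_append, P_singleton, mul_assoc]
          set z := (of g)⁻¹ * x * of g with hzdef
          have hz : z = P l'' * of (g' * g) := by
            rw [hzdef, hx_eq, map_mul]
            group
          have hz1 : z ≠ 1 := by
            intro h
            apply hx1
            have : x = of g * z * (of g)⁻¹ := by rw [hzdef]; group
            rw [this, h]; group
          have hzz : z * z = 1 := by
            have : z * z = (of g)⁻¹ * (x * x) * of g := by rw [hzdef]; group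
            rw [this, hx2]; group
          have hxz : x = of g * z * (of g)⁻¹ := by rw [hzdef]; group
          -- get the shorter word for z
          have hlen' : (Word.equiv z).toList.length ≤ n := by
            by_cases hgg : g' * g = 1
            · have hz' : z = P l'' := by rw [hz, hgg, map_one, mul_one]
              have hw : Word.prod (⟨l'', fun p hp => h1 p (hsub p hp), hch''⟩ : Word G) = z := by
                rw [word_prod_eq, hz']
              rw [← hw, equiv_prod]
              show l''.length ≤ n
              have : l''.length + 1 = l'.length := by
                rw [← hsplit]; simp
              omega
            · have h1₂ : ∀ p ∈ l'' ++ [(⟨j, g' * g⟩ : Σ i, G i)], p.2 ≠ 1 := by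
                intro p hp
                rcases List.mem_append.1 hp with h | h
                · exact h1 p (hsub p h)
                · rw [List.mem_singleton] at h; subst h; exact hgg
              have hch₂ : (l'' ++ [(⟨j, g' * g⟩ : Σ i, G i)]).Chain'
                  fun p q => p.1 ≠ q.1 := by
                rw [List.Chain', List.isChain_append]
                exact ⟨hch'', List.isChain_singleton _, fun p hp q hq => by
                  rw [List.head?_singleton] at hq
                  cases hq
                  exact hbound p hp ⟨j, g'⟩ rfl⟩
              have hw : Word.prod (⟨l'' ++ [(⟨j, g' * g⟩ : Σ i, G i)], h1₂, hch₂⟩ : Word G) = z := by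
                rw [word_prod_eq, hz]
                show P (l'' ++ [⟨j, g' * g⟩]) = _
                rw [P_append, P_singleton]
              rw [← hw, equiv_prod]
              show (l'' ++ [(⟨j, g' * g⟩ : Σ i, G i)]).length ≤ n
              have : l''.length + 1 = l'.length := by rw [← hsplit]; simp
              simp only [List.length_append, List.length_singleton]
              omega
          obtain ⟨h, i₀, g₀, hg₀, hg₀1, hzc⟩ := ih z hlen' hz1 hzz
          exact ⟨of g * h, i₀, g₀, hg₀, hg₀1, by rw [hxz, hzc]; group⟩
        · exfalso
          exact sq_ne_one _ hlne h1 h2 hij (hxw ▸ hx2)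

end

theorem conj_lemma' (x : Monoid.CoprodI G) (h1 : x ≠ 1) (h2 : x * x = 1) :
    ∃ (h : Monoid.CoprodI G) (i : ι) (g : G i), g * g = 1 ∧ g ≠ 1 ∧ x = h * of g * h⁻¹ := by
  classical
  exact conj_lemma (Word.equiv x).toList.length x le_rfl h1 h2
end InvolAux

section Transfer

universe u v

variable (G₁ : Type u) (G₂ : Type v) [Group G₁] [Group G₂]

def Fam : Bool → Type (max u v)
  | true => ULift.{v} G₁
  | false => ULift.{u} G₂

instance : ∀ b, Group (Fam G₁ G₂ b)
  | true => inferInstanceAs (Group (ULift G₁))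
  | false => inferInstanceAs (Group (ULift G₂))

def φ : Coprod G₁ G₂ →* CoprodI (Fam G₁ G₂) :=
  Coprod.lift
    ((of (M := Fam G₁ G₂) (i := true)).comp MulEquiv.ulift.symm.toMonoidHom)
    ((of (M := Fam G₁ G₂) (i := false)).comp MulEquiv.ulift.symm.toMonoidHom)

def ψ : CoprodI (Fam G₁ G₂) →* Coprod G₁ G₂ :=
  CoprodI.lift fun b => match b with
    | true => Coprod.inl.comp (MulEquiv.ulift.toMonoidHom)
    | false => Coprod.inr.comp (MulEquiv.ulift.toMonoidHom)

theorem ψ_φ (x : Coprod G₁ G₂) : ψ G₁ G₂ (φ G₁ G₂ x) = x := by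
  have : (ψ G₁ G₂).comp (φ G₁ G₂) = MonoidHom.id _ := by
    apply Coprod.hom_ext <;> ext x <;>
      simp [φ, ψ, Coprod.lift_apply_inl, Coprod.lift_apply_inr, lift_of, MulEquiv.apply_symm_apply] <;> rfl
  exact DFunLike.congr_fun this x

theorem φ_injective : Function.Injective (φ G₁ G₂) := by
  intro a b h
  rw [← ψ_φ G₁ G₂ a, h, ψ_φ]

end Transfer



namespace InvolAux

universe u v

variable {G₁ : Type u} {G₂ : Type v} [Group G₁] [Group G₂]

theorem conj_coprod (c : Monoid.Coprod G₁ G₂) (hc : c ^ 2 = 1) (hc1 : c ≠ 1) :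
    ∃ (h a : Monoid.Coprod G₁ G₂),
      ((∃ x : G₁, x ^ 2 = 1 ∧ x ≠ 1 ∧ a = Monoid.Coprod.inl x) ∨
        (∃ y : G₂, y ^ 2 = 1 ∧ y ≠ 1 ∧ a = Monoid.Coprod.inr y)) ∧
      c = h * a * h⁻¹ := by
  set c' := φ G₁ G₂ c with hc'def
  have hsq : c' * c' = 1 := by
    rw [hc'def, ← map_mul, ← sq, hc, map_one]
  have hne : c' ≠ 1 := by
    intro h
    exact hc1 (φ_injective G₁ G₂ (by rw [← hc'def, h, map_one]))
  obtain ⟨h', i, g, hg, hg1, hcc⟩ := conj_lemma' c' hne hsq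
  have hcψ : c = ψ G₁ G₂ h' * ψ G₁ G₂ (of g) * (ψ G₁ G₂ h')⁻¹ := by
    rw [← map_inv, ← map_mul, ← map_mul, ← hcc, hc'def, ψ_φ]
  cases i with
  | true =>
    refine ⟨ψ G₁ G₂ h', Monoid.Coprod.inl (MulEquiv.ulift g), Or.inl
      ⟨MulEquiv.ulift g, ?_, ?_, rfl⟩, ?_⟩
    · rw [sq]; exact congrArg ULift.down hg
    · intro h
      exact hg1 (MulEquiv.ulift.injective (by rw [h]; rfl))
    · rw [hcψ]
      congr 1
  | false =>
    refine ⟨ψ G₁ G₂ h', Monoid.Coprod.inr (MulEquiv.ulift g), Or.inr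
      ⟨MulEquiv.ulift g, ?_, ?_, rfl⟩, ?_⟩
    · rw [sq]; exact congrArg ULift.down hg
    · intro h
      exact hg1 (MulEquiv.ulift.injective (by rw [h]; rfl))
    · rw [hcψ]
      congr 1

end InvolAux

/-- If `c` and `d` are involutions in a free product `G₁ * G₂`, then `c * d` either has
finite order or is conjugate to an element of the form `c₁ * z * c₂ * z⁻¹`, where `c₁`
and `c₂` are involutions lying in `G₁` or `G₂`. -/
theorem stmt_1 {G₁ G₂ : Type*} [Group G₁] [Group G₂]
    (c d : Monoid.Coprod G₁ G₂)
    (hc : c ^ 2 = 1) (hc1 : c ≠ 1) (hd : d ^ 2 = 1) (hd1 : d ≠ 1) :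
    IsOfFinOrder (c * d) ∨
      ∃ (h z c₁ c₂ : Monoid.Coprod G₁ G₂),
        ((∃ x : G₁, x ^ 2 = 1 ∧ x ≠ 1 ∧ c₁ = Monoid.Coprod.inl x) ∨
          (∃ y : G₂, y ^ 2 = 1 ∧ y ≠ 1 ∧ c₁ = Monoid.Coprod.inr y)) ∧
        ((∃ x : G₁, x ^ 2 = 1 ∧ x ≠ 1 ∧ c₂ = Monoid.Coprod.inl x) ∨
          (∃ y : G₂, y ^ 2 = 1 ∧ y ≠ 1 ∧ c₂ = Monoid.Coprod.inr y)) ∧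
        c * d = h * (c₁ * z * c₂ * z⁻¹) * h⁻¹ := by
  right
  obtain ⟨h₁, a, ha, hca⟩ := InvolAux.conj_coprod c hc hc1
  obtain ⟨h₂, b, hb, hdb⟩ := InvolAux.conj_coprod d hd hd1
  exact ⟨h₁, h₁⁻¹ * h₂, a, b, ha, hb, by rw [hca, hdb]; group⟩
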